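/- Suppose A_N ∈ R^{m×n_N} has full row rank with σ_N = σ_min(A_N A_N^T) > 0, ∇f is L-Lipschitz, and the dual update satisfies A_N^T λ^{k+1} = ∇_N f(x_1^{k+1},...,x_{N-1}^{k+1}, x_N^k) − L(x_N^k − x_N^{k+1}) for all k (as in proximal ADMM-m). Then ‖λ^{k+1} − λ^k‖² ≤ (3L²/σ_N)‖x_N^k − x_N^{k+1}‖² + (6L²/σ_N)‖x_N^{k-1} − x_N^k‖² + (3L²/σ_N) Σ_{i=1}^{N-1}‖x_i^k − x_i^{k+1}‖². -/

import Mathlib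

theorem stmt_15 (N m : ℕ) (n : Fin (N + 1) → ℕ)
    (f : PiLp 2 (fun i : Fin (N + 1) => EuclideanSpace ℝ (Fin (n i))) → ℝ)
    (G : PiLp 2 (fun i : Fin (N + 1) => EuclideanSpace ℝ (Fin (n i))) →
      PiLp 2 (fun i : Fin (N + 1) => EuclideanSpace ℝ (Fin (n i))))
    (AN : EuclideanSpace ℝ (Fin (n (Fin.last N))) →L[ℝ] EuclideanSpace ℝ (Fin m))
    (L σN : ℝ)
    (x : ℕ → PiLp 2 (fun i : Fin (N + 1) => EuclideanSpace ℝ (Fin (n i))))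
    (y : ℕ → PiLp 2 (fun i : Fin (N + 1) => EuclideanSpace ℝ (Fin (n i))))
    (lam : ℕ → EuclideanSpace ℝ (Fin m))
    (hL : 0 < L) (hσ : 0 < σN)
    -- σN is the smallest eigenvalue of A_N A_N^T
    (hσmin : ∀ μ : EuclideanSpace ℝ (Fin m),
      σN * ‖μ‖ ^ 2 ≤ ‖ContinuousLinearMap.adjoint AN μ‖ ^ 2)
    (hgrad : ∀ u, HasGradientAt f (G u) u)
    (hlip : LipschitzWith (Real.toNNReal L) G)
    -- y k is the mixed point (x₁^{k+1}, …, x_{N-1}^{k+1}, x_N^k)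
    (hylast : ∀ k, y k (Fin.last N) = x k (Fin.last N))
    (hyother : ∀ k, ∀ i : Fin (N + 1), i ≠ Fin.last N → y k i = x (k + 1) i)
    -- dual update of proximal ADMM-m
    (hdual : ∀ k, ContinuousLinearMap.adjoint AN (lam (k + 1)) =
      G (y k) (Fin.last N) - L • (x k (Fin.last N) - x (k + 1) (Fin.last N)))
    (k : ℕ) (hk : 1 ≤ k) :
    ‖lam (k + 1) - lam k‖ ^ 2 ≤
      (3 * L ^ 2 / σN) * ‖x k (Fin.last N) - x (k + 1) (Fin.last N)‖ ^ 2
        + (6 * L ^ 2 / σN) * ‖x (k - 1) (Fin.last N) - x k (Fin.last N)‖ ^ 2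
        + (3 * L ^ 2 / σN) * ∑ i : Fin N, ‖x k i.castSucc - x (k + 1) i.castSucc‖ ^ 2 := by
  obtain ⟨j, rfl⟩ : ∃ j, k = j + 1 := ⟨k - 1, (Nat.succ_pred_eq_of_pos hk).symm⟩
  have hj : j + 1 - 1 = j := rfl
  rw [hj]
  set A := ContinuousLinearMap.adjoint AN
  set d := lam (j + 1 + 1) - lam (j + 1)
  -- A^T of difference
  have hAd : A d = (G (y (j + 1)) (Fin.last N) - G (y j) (Fin.last N))
      - L • (x (j + 1) (Fin.last N) - x (j + 1 + 1) (Fin.last N))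
      + L • (x j (Fin.last N) - x (j + 1) (Fin.last N)) := by
    have h1 := hdual (j + 1)
    have h2 := hdual j
    simp only [d, map_sub, h1, h2]
    abel
  -- abbreviations
  set a := ‖x (j + 1) (Fin.last N) - x (j + 1 + 1) (Fin.last N)‖ with ha
  set b := ‖x j (Fin.last N) - x (j + 1) (Fin.last N)‖ with hb
  set S := ∑ i : Fin N, ‖x (j + 1) i.castSucc - x (j + 1 + 1) i.castSucc‖ ^ 2 with hS
  have hSnn : 0 ≤ S := Finset.sum_nonneg fun i _ => by positivity
  -- Lipschitz bound on component
  have hcomp : ‖G (y (j + 1)) (Fin.last N) - G (y j) (Fin.last N)‖ ^ 2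
      ≤ L ^ 2 * (S + b ^ 2) := by
    have h1 : ‖G (y (j + 1)) (Fin.last N) - G (y j) (Fin.last N)‖ ^ 2
        ≤ ‖G (y (j + 1)) - G (y j)‖ ^ 2 := by
      calc ‖G (y (j + 1)) (Fin.last N) - G (y j) (Fin.last N)‖ ^ 2
          ≤ ∑ i, ‖(G (y (j + 1)) - G (y j)) i‖ ^ 2 := by
            have := Finset.single_le_sum (f := fun i => ‖(G (y (j + 1)) - G (y j)) i‖ ^ 2)
              (fun i _ => by positivity) (Finset.mem_univ (Fin.last N))
            simpa only [PiLp.sub_apply] using this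
        _ = ‖G (y (j + 1)) - G (y j)‖ ^ 2 := (PiLp.norm_sq_eq_of_L2 _ _).symm
    have h2 : ‖G (y (j + 1)) - G (y j)‖ ≤ L * ‖y (j + 1) - y j‖ := by
      have := hlip.dist_le_mul (y (j + 1)) (y j)
      simpa [dist_eq_norm, Real.coe_toNNReal L hL.le] using this
    have h3 : ‖y (j + 1) - y j‖ ^ 2 = S + b ^ 2 := by
      rw [PiLp.norm_sq_eq_of_L2, Fin.sum_univ_castSucc]
      congr 1
      · apply Finset.sum_congr rfl
        intro i _
        have hi : (i.castSucc : Fin (N + 1)) ≠ Fin.last N := Fin.castSucc_lt_last i |>.ne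
        rw [PiLp.sub_apply, hyother (j + 1) _ hi, hyother j _ hi, norm_sub_rev]
      · rw [PiLp.sub_apply, hylast (j + 1), hylast j, ← norm_sub_rev]
    calc ‖G (y (j + 1)) (Fin.last N) - G (y j) (Fin.last N)‖ ^ 2
        ≤ ‖G (y (j + 1)) - G (y j)‖ ^ 2 := h1
      _ ≤ (L * ‖y (j + 1) - y j‖) ^ 2 := by
          apply pow_le_pow_left₀ (norm_nonneg _) h2
      _ = L ^ 2 * (S + b ^ 2) := by rw [mul_pow, h3]
  -- norm bound on A d
  set c := ‖G (y (j + 1)) (Fin.last N) - G (y j) (Fin.last N)‖ with hc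
  have hsm : ∀ u : EuclideanSpace ℝ (Fin (n (Fin.last N))), ‖L • u‖ = L * ‖u‖ := fun u => by
    rw [norm_smul, Real.norm_of_nonneg hL.le]
  have hAdn : ‖A d‖ ≤ c + L * a + L * b := by
    rw [hAd]
    calc ‖_ + L • (x j (Fin.last N) - x (j + 1) (Fin.last N))‖
        ≤ ‖G (y (j + 1)) (Fin.last N) - G (y j) (Fin.last N)
            - L • (x (j + 1) (Fin.last N) - x (j + 1 + 1) (Fin.last N))‖
          + ‖L • (x j (Fin.last N) - x (j + 1) (Fin.last N))‖ := norm_add_le _ _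
      _ ≤ (‖G (y (j + 1)) (Fin.last N) - G (y j) (Fin.last N)‖
            + ‖L • (x (j + 1) (Fin.last N) - x (j + 1 + 1) (Fin.last N))‖)
          + ‖L • (x j (Fin.last N) - x (j + 1) (Fin.last N))‖ := by
            gcongr
            exact norm_sub_le _ _
      _ = c + L * a + L * b := by rw [hsm, hsm]
  have hσd : σN * ‖d‖ ^ 2 ≤ (c + L * a + L * b) ^ 2 := by
    refine le_trans (hσmin d) ?_
    apply pow_le_pow_left₀ (norm_nonneg _) hAdn
  have h3sq : (c + L * a + L * b) ^ 2 ≤ 3 * (c ^ 2 + (L * a) ^ 2 + (L * b) ^ 2) := by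
    nlinarith [sq_nonneg (c - L * a), sq_nonneg (c - L * b), sq_nonneg (L * a - L * b)]
  have key : σN * ‖d‖ ^ 2 ≤ 3 * L ^ 2 * a ^ 2 + 6 * L ^ 2 * b ^ 2 + 3 * L ^ 2 * S := by
    nlinarith [hcomp, hσd, h3sq]
  rw [div_mul_eq_mul_div, div_mul_eq_mul_div, div_mul_eq_mul_div,
    ← add_div, ← add_div, le_div_iff₀ hσ]
  nlinarith [key]
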